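/- Let Problem A1 maximize Σ_j z_j·v_j − Σ_i Σ_{k∈S_i} x_{i,k}·c_{i,k} over binary x subject to the budget constraints Σ_{k∈S_i} x_{i,k}·c_{i,k} ≤ C_i, with y_k = max{x_{i,k} : i with k ∈ S_i} and z_j = min{y_k : k ∈ K_j}. Let Problem A2 be the same maximization over binary (x, y, z) subject to the budget constraints, y_k ≥ x_{i,k} for all i with k ∈ S_i, y_k ≤ Σ_{i: k∈S_i} x_{i,k}, and z_j ≤ y_k for all k ∈ K_j. If v_j > 0 for every j, then Problems A1 and A2 have the same optimal value, and any maximizer of A2 yields a maximizer of A1 with the same objective value (Lemma 2 and Theorem 1). -/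

import Mathlib

open Finset

/-- An MCS (Mobile Crowd Sensing) instance: users `I`, tasks `J`, data items `K`,
sensing capabilities `S`, sensing costs `c`, budgets `C`,
data requirements `req`, and task valuations `v`. -/
structure MCS (I J K : Type*) where
  S : I → Finset K
  c : I → K → ℝ
  C : I → ℝ
  req : J → Finset K
  v : J → ℝ

variable {I J K : Type*} [Fintype I] [Fintype J] [Fintype K] [DecidableEq K]

/-- Total sensing cost of a schedule `x`. -/
def MCS.cost (M : MCS I J K) (x : I → K → ℕ) : ℝ :=
  ∑ i, ∑ k ∈ M.S i, (x i k : ℝ) * M.c i k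

/-- Social welfare: total valuation of completed tasks minus total sensing cost. -/
def MCS.welfare (M : MCS I J K) (x : I → K → ℕ) (z : J → ℕ) : ℝ :=
  (∑ j, (z j : ℝ) * M.v j) - M.cost x

/-- Budget-feasible binary schedule, supported on the users' sensing capabilities. -/
def MCS.feasible (M : MCS I J K) (x : I → K → ℕ) : Prop :=
  (∀ i k, x i k = 0 ∨ x i k = 1) ∧
  (∀ i k, k ∉ M.S i → x i k = 0) ∧
  (∀ i, ∑ k ∈ M.S i, (x i k : ℝ) * M.c i k ≤ M.C i)

/-- `y_k = max { x_{i,k} : i with k ∈ S_i }`: whether data item `k` is sensed. -/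
def MCS.ysense (M : MCS I J K) (x : I → K → ℕ) (k : K) : ℕ :=
  (univ.filter fun i => k ∈ M.S i).sup fun i => x i k

/-- `z_j = min { y_k : k ∈ K_j }`: whether task `j` is completed. -/
def MCS.zdone (M : MCS I J K) (x : I → K → ℕ) (j : J) : ℕ :=
  if ∀ k ∈ M.req j, M.ysense x k = 1 then 1 else 0

/-- `x` is a welfare-maximizing budget-feasible schedule. -/
def MCS.optAssign (M : MCS I J K) (x : I → K → ℕ) : Prop :=
  M.feasible x ∧
  ∀ x', M.feasible x' → M.welfare x' (M.zdone x') ≤ M.welfare x (M.zdone x)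

/-- Standard model assumptions: nonnegative costs, positive budgets,
positive valuations, nonempty data requirements. -/
def MCS.valid (M : MCS I J K) : Prop :=
  (∀ i k, 0 ≤ M.c i k) ∧ (∀ i, 0 < M.C i) ∧ (∀ j, 0 < M.v j) ∧ (∀ j, (M.req j).Nonempty)

/-- Feasibility for Problem A2: binary variables `x, y, z`, budget constraints,
`x_{i,k} ≤ y_k` for all `i` with `k ∈ S_i`, `y_k ≤ ∑_{i : k ∈ S_i} x_{i,k}`,
and the relaxed constraints `z_j ≤ y_k` for all `k ∈ K_j`. -/
def MCS.A2Feasible (M : MCS I J K) (x : I → K → ℕ) (y : K → ℕ) (z : J → ℕ) : Prop :=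
  (∀ i k, x i k = 0 ∨ x i k = 1) ∧
  (∀ i k, k ∉ M.S i → x i k = 0) ∧
  (∀ k, y k = 0 ∨ y k = 1) ∧
  (∀ j, z j = 0 ∨ z j = 1) ∧
  (∀ i, ∑ k ∈ M.S i, (x i k : ℝ) * M.c i k ≤ M.C i) ∧
  (∀ i k, k ∈ M.S i → x i k ≤ y k) ∧
  (∀ k, y k ≤ ∑ i ∈ univ.filter (fun i => k ∈ M.S i), x i k) ∧
  (∀ j, ∀ k ∈ M.req j, z j ≤ y k)

/-- **Lemma 2 and Theorem 1 (equivalence of Problems A1 and A2).**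
Problem A1 maximizes `W(x) = ∑_j z_j v_j − ∑_i ∑_{k ∈ S_i} x_{i,k} c_{i,k}` over
budget-feasible binary `x`, with induced `y_k = max_{i : k ∈ S_i} x_{i,k}` and
`z_j = min_{k ∈ K_j} y_k`.  Problem A2 is the relaxed formulation `MCS.A2Feasible`.
If `v_j > 0` for every `j`, then any maximizer `(x, y, z)` of Problem A2 yields a
maximizer `x` of Problem A1 with the same objective value; in particular the two
problems have the same optimal value. -/
theorem A1_equiv_A2 (M : MCS I J K)
    (hc : ∀ i k, 0 ≤ M.c i k) (hC : ∀ i, 0 < M.C i)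
    (hv : ∀ j, 0 < M.v j) (hne : ∀ j, (M.req j).Nonempty)
    (x : I → K → ℕ) (y : K → ℕ) (z : J → ℕ)
    (hfeas : M.A2Feasible x y z)
    (hopt : ∀ x' y' z', M.A2Feasible x' y' z' → M.welfare x' z' ≤ M.welfare x z) :
    M.feasible x ∧
    M.welfare x (M.zdone x) = M.welfare x z ∧
    ∀ x', M.feasible x' → M.welfare x' (M.zdone x') ≤ M.welfare x (M.zdone x) := by
  obtain ⟨hx01, hxsupp, hy01, hz01, hbud, hxy, hyx, hzy⟩ := hfeas
  have hfeasx : M.feasible x := ⟨hx01, hxsupp, hbud⟩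
  -- ysense of x agrees with y
  have hys : ∀ k, M.ysense x k = y k := by
    intro k
    unfold MCS.ysense
    refine le_antisymm (Finset.sup_le fun i hi => hxy i k (mem_filter.mp hi).2) ?_
    rcases hy01 k with h0 | h1
    · simp [h0]
    · rw [h1]
      by_contra h
      have hall : ∀ i ∈ univ.filter (fun i => k ∈ M.S i), x i k = 0 := by
        intro i hi
        have := Finset.le_sup (f := fun i => x i k) hi
        omega
      have hk := hyx k
      rw [Finset.sum_eq_zero hall, h1] at hk
      omega
  -- monotonicity of welfare in z
  have hmono : ∀ (x' : I → K → ℕ) (z₁ z₂ : J → ℕ), (∀ j, z₁ j ≤ z₂ j) →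
      M.welfare x' z₁ ≤ M.welfare x' z₂ := by
    intro x' z₁ z₂ h
    unfold MCS.welfare
    apply sub_le_sub_right
    apply Finset.sum_le_sum
    intro j _
    exact mul_le_mul_of_nonneg_right (Nat.cast_le.mpr (h j)) (hv j).le
  -- zdone x dominates z
  have hzle : ∀ j, z j ≤ M.zdone x j := by
    intro j
    rcases hz01 j with h0 | h1
    · simp [h0]
    · have : M.zdone x j = 1 := by
        unfold MCS.zdone
        rw [if_pos]
        intro k hk
        have h1' := hzy j k hk
        rw [h1] at h1'
        rcases hy01 k with hy0 | hy1
        · omega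
        · rw [hys k, hy1]
      omega
  -- (x, y, zdone x) is A2-feasible
  have hzdone01 : ∀ (x' : I → K → ℕ) j, M.zdone x' j = 0 ∨ M.zdone x' j = 1 := by
    intro x' j
    unfold MCS.zdone
    split <;> simp
  have hfeas2 : M.A2Feasible x y (M.zdone x) := by
    refine ⟨hx01, hxsupp, hy01, hzdone01 x, hbud, hxy, hyx, ?_⟩
    intro j k hk
    unfold MCS.zdone
    split
    · rename_i hall
      have := hall k hk
      rw [hys k] at this
      omega
    · omega
  have heq : M.welfare x (M.zdone x) = M.welfare x z :=
    le_antisymm (hopt x y (M.zdone x) hfeas2) (hmono x z (M.zdone x) hzle)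
  refine ⟨hfeasx, heq, ?_⟩
  intro x' hx'
  obtain ⟨hx'01, hx'supp, hx'bud⟩ := hx'
  have hy'01 : ∀ k, M.ysense x' k = 0 ∨ M.ysense x' k = 1 := by
    intro k
    have : M.ysense x' k ≤ 1 := Finset.sup_le fun i _ => by
      rcases hx'01 i k with h | h <;> omega
    omega
  have hfeas2' : M.A2Feasible x' (M.ysense x') (M.zdone x') := by
    refine ⟨hx'01, hx'supp, hy'01, hzdone01 x', hx'bud, ?_, ?_, ?_⟩
    · intro i k hk
      exact Finset.le_sup (f := fun i => x' i k) (mem_filter.mpr ⟨mem_univ i, hk⟩)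
    · intro k
      apply Finset.sup_le
      intro i hi
      exact Finset.single_le_sum (f := fun i => x' i k) (fun i _ => Nat.zero_le _) hi
    · intro j k hk
      unfold MCS.zdone
      split
      · rename_i hall
        rw [hall k hk]
      · omega
  calc M.welfare x' (M.zdone x') ≤ M.welfare x z := hopt _ _ _ hfeas2'
    _ = M.welfare x (M.zdone x) := heq.symm
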